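/- Let S be a flat semiring with more than one element satisfying a·b·c = 0 for all a, b, c ∈ S (that is, S is 3-nilpotent). Then S is subdirectly irreducible if and only if S is isomorphic, as an additively idempotent semiring, to the graph semiring S_G of some graph G. -/

import Mathlib

universe u

-- The flat addition determined by a zero element: `a + b = a` if `a = b`, else `0`.
open Classical in
noncomputable def fAdd {S : Type u} (zero : S) (a b : S) : S :=
  if a = b then a else zero

-- A congruence of the flat semiring `(S, fAdd zero, mul)`: an equivalence relation
-- compatible with both the (flat) addition and the multiplication.
def IsCongr {S : Type u} (mul : S → S → S) (zero : S) (r : S → S → Prop) : Prop :=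
  Equivalence r ∧
    (∀ a b c d : S, r a b → r c d → r (fAdd zero a c) (fAdd zero b d)) ∧
    (∀ a b c d : S, r a b → r c d → r (mul a c) (mul b d))

-- Subdirect irreducibility: the congruences different from equality have a least
-- element with respect to inclusion.
def SubdirectlyIrred {S : Type u} (mul : S → S → S) (zero : S) : Prop :=
  ∃ m : S → S → Prop,
    (IsCongr mul zero m ∧ m ≠ (fun a b => a = b)) ∧
    ∀ r : S → S → Prop, IsCongr mul zero r → r ≠ (fun a b => a = b) →
      ∀ a b : S, m a b → r a b

-- `(S, mul, zero)` is a flat semiring: `mul` is associative, `zero` is a (multiplicative)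
-- zero element, and `mul` is 0-cancellative.
def IsFlat {S : Type u} (mul : S → S → S) (zero : S) : Prop :=
  (∀ a b c : S, mul (mul a b) c = mul a (mul b c)) ∧
  (∀ a : S, mul zero a = zero ∧ mul a zero = zero) ∧
  (∀ a b c : S, mul a b = mul a c → mul a b ≠ zero → b = c) ∧
  (∀ a b c : S, mul b a = mul c a → mul b a ≠ zero → b = c)

-- `spow mul a n = a^(n+1)`.
def spow {S : Type u} (mul : S → S → S) (a : S) : ℕ → S
  | 0 => a
  | n + 1 => mul (spow mul a n) a

-- Every element has a power (with exponent `n ≥ 1`) equal to zero.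
def IsNil {S : Type u} (mul : S → S → S) (zero : S) : Prop :=
  ∀ a : S, ∃ n : ℕ, 1 ≤ n ∧ spow mul a (n - 1) = zero

-- `w` is an annihilator: a nonzero element whose product with anything is zero.
def IsAnnihilator {S : Type u} (mul : S → S → S) (zero : S) (w : S) : Prop :=
  w ≠ zero ∧ ∀ s : S, mul w s = zero ∧ mul s w = zero

-- `w ∈ S¹aS¹ = {a} ∪ aS ∪ Sa ∪ SaS`.
def memS1aS1 {S : Type u} (mul : S → S → S) (a w : S) : Prop :=
  w = a ∨ (∃ s, w = mul a s) ∨ (∃ s, w = mul s a) ∨ (∃ s t, w = mul (mul s a) t)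

-- The underlying set of the graph semiring of a graph with vertex set `V`:
-- the vertices together with two extra elements `0` and `ω`.
inductive GS (V : Type u) : Type u where
  | zero : GS V
  | omega : GS V
  | vert : V → GS V

-- Multiplication of the graph semiring: `x·y = ω` if `x, y` are vertices joined by an
-- edge, and `x·y = 0` otherwise.
open Classical in
noncomputable def gsMul {V : Type u} (E : V → V → Prop) : GS V → GS V → GS V
  | GS.vert a, GS.vert b => if E a b then GS.omega else GS.zero
  | _, _ => GS.zero

-- The flat addition of the graph semiring: `a + b = a` if `a = b`, else `0`.
open Classical in
noncomputable def gsAdd {V : Type u} (a b : GS V) : GS V :=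
  if a = b then a else GS.zero

-- `gsSum f n = f 0 + f 1 + ⋯ + f n` (a sum of `n + 1` terms).
noncomputable def gsSum {V : Type u} (f : ℕ → GS V) : ℕ → GS V
  | 0 => f 0
  | n + 1 => gsAdd (gsSum f n) (f (n + 1))

-- `E` is a graph (in the sense of the paper): a directed graph with no isolated
-- vertices in which every vertex has out-degree at most 1 and in-degree at most 1.
def IsGraph {V : Type u} (E : V → V → Prop) : Prop :=
  (∀ v : V, ∃ u : V, E v u ∨ E u v) ∧
  (∀ v a b : V, E v a → E v b → a = b) ∧
  (∀ v a b : V, E a v → E b v → a = b)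

-- `v 0, v 1, …, v (m - 1)` is a path of the graph `E` with `m` vertices.
def IsPathOn {V : Type u} (E : V → V → Prop) (m : ℕ) (v : ℕ → V) : Prop :=
  (∀ i < m, ∀ j < m, v i = v j → i = j) ∧
  (∀ i : ℕ, i + 1 < m → E (v i) (v (i + 1)))

-- `v 0, v 1, …, v (m - 1)` is a cycle of the graph `E` of length `m`.
def IsCycleOn {V : Type u} (E : V → V → Prop) (m : ℕ) (v : ℕ → V) : Prop :=
  1 ≤ m ∧
  (∀ i < m, ∀ j < m, v i = v j → i = j) ∧
  (∀ i : ℕ, i + 1 < m → E (v i) (v (i + 1))) ∧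
  E (v (m - 1)) (v 0)

section Aux

variable {S : Type u} {mul : S → S → S} {zero : S}

lemma fAdd_self (zero a : S) : fAdd zero a a = a := if_pos rfl
lemma fAdd_ne {a b : S} (zero : S) (h : a ≠ b) : fAdd zero a b = zero := if_neg h

lemma congr_of_ideal (mul : S → S → S) (zero : S) (C : S → Prop) (h0 : C zero)
    (hid : ∀ a s, C a → C (mul a s) ∧ C (mul s a)) :
    IsCongr mul zero (fun a b => a = b ∨ (C a ∧ C b)) := by
  refine ⟨⟨fun a => Or.inl rfl, ?_, ?_⟩, ?_, ?_⟩
  · rintro a b (rfl | h)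
    · exact Or.inl rfl
    · exact Or.inr ⟨h.2, h.1⟩
  · rintro a b c (rfl | hab) hbc
    · exact hbc
    · rcases hbc with rfl | hbc
      · exact Or.inr hab
      · exact Or.inr ⟨hab.1, hbc.2⟩
  · intro a b c d hab hcd
    simp only [fAdd]
    split_ifs with h1 h2 h2
    · exact hab
    · -- a = c, b ≠ d : show r a zero, need C a
      rcases hab with rfl | hab
      · rcases hcd with rfl | hcd
        · exact absurd h1 h2
        · exact Or.inr ⟨h1 ▸ hcd.1, h0⟩
      · exact Or.inr ⟨hab.1, h0⟩
    · rcases hab with rfl | hab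
      · rcases hcd with rfl | hcd
        · exact absurd h2 h1
        · exact Or.inr ⟨h0, h2 ▸ hcd.2⟩
      · exact Or.inr ⟨h0, hab.2⟩
    · exact Or.inl rfl
  · intro a b c d hab hcd
    rcases hab with rfl | hab
    · rcases hcd with rfl | hcd
      · exact Or.inl rfl
      · exact Or.inr ⟨(hid c a hcd.1).2, (hid d a hcd.2).2⟩
    · exact Or.inr ⟨(hid a c hab.1).1, (hid b d hab.2).1⟩

lemma congr_rel_zero {r : S → S → Prop} (hc : IsCongr mul zero r)
    {x y : S} (hxy : r x y) (hne : x ≠ y) : r x zero := by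
  have h := hc.2.1 x x x y (hc.1.refl x) hxy
  simpa only [fAdd, if_pos rfl, if_neg hne, ↓reduceIte] using h

lemma congr_ne_eq {r : S → S → Prop} {x : S} (hrx : r x zero) (hx : x ≠ zero) :
    r ≠ (fun a b => a = b) := by
  intro h
  rw [h] at hrx
  exact hx hrx

lemma exists_rel_ne {r : S → S → Prop} (hr : Equivalence r)
    (hne : r ≠ (fun a b => a = b)) : ∃ x y, x ≠ y ∧ r x y := by
  by_contra h
  push_neg at h
  apply hne
  funext a b
  apply propext
  constructor
  · intro hab
    by_contra hne'
    exact h a b hne' hab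
  · rintro rfl; exact hr.refl a

lemma gsMul_zero_left {V : Type u} (E : V → V → Prop) (x : GS V) :
    gsMul E GS.zero x = GS.zero := by cases x <;> rfl

lemma gsMul_zero_right {V : Type u} (E : V → V → Prop) (x : GS V) :
    gsMul E x GS.zero = GS.zero := by cases x <;> rfl

lemma gsMul_omega_left {V : Type u} (E : V → V → Prop) (x : GS V) :
    gsMul E GS.omega x = GS.zero := by cases x <;> rfl

lemma gsMul_omega_right {V : Type u} (E : V → V → Prop) (x : GS V) :
    gsMul E x GS.omega = GS.zero := by cases x <;> rfl

open Classical in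
lemma gsMul_vert {V : Type u} (E : V → V → Prop) (a b : V) :
    gsMul E (GS.vert a) (GS.vert b) = if E a b then GS.omega else GS.zero := rfl

end Aux

/-- A flat semiring with more than one element satisfying `a·b·c = 0`
(i.e. `3`-nilpotent) is subdirectly irreducible iff it is isomorphic, as an additively
idempotent semiring, to the graph semiring of some graph. -/
theorem stmt_7 {S : Type u} (mul : S → S → S) (zero : S)
    (hflat : IsFlat mul zero) (h3nil : ∀ a b c : S, mul (mul a b) c = zero)
    (hnontriv : ∃ a b : S, a ≠ b) :
    SubdirectlyIrred mul zero ↔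
      ∃ (V : Type u) (E : V → V → Prop), IsGraph E ∧
        ∃ φ : S → GS V, Function.Bijective φ ∧
          (∀ a b : S, φ (fAdd zero a b) = gsAdd (φ a) (φ b)) ∧
          (∀ a b : S, φ (mul a b) = gsMul E (φ a) (φ b)) := by
  classical
  obtain ⟨hassoc, hzero, hlc, hrc⟩ := hflat
  -- products of three are zero, other association
  have h3nil' : ∀ a b c : S, mul a (mul b c) = zero := by
    intro a b c; rw [← hassoc]; exact h3nil a b c
  constructor
  · -- SI → graph
    rintro ⟨m, ⟨hm, hmne⟩, hmin⟩
    obtain ⟨x, y, hxy, hmxy⟩ := exists_rel_ne hm.1 hmne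
    -- produce ω ≠ zero with m ω zero
    obtain ⟨ω, hω0, hmω⟩ : ∃ w, w ≠ zero ∧ m w zero := by
      by_cases hx : x = zero
      · subst hx
        exact ⟨y, fun h => hxy h.symm,
          congr_rel_zero hm (hm.1.symm hmxy) (Ne.symm hxy)⟩
      · exact ⟨x, hx, congr_rel_zero hm hmxy hxy⟩
    -- any nonzero annihilator equals ω
    have hann_unique : ∀ p, p ≠ zero → (∀ s, mul p s = zero ∧ mul s p = zero) →
        ω = p := by
      intro p hp hpann
      set C : S → Prop := fun y => y = zero ∨ y = p with hC
      have hid : ∀ a s, C a → C (mul a s) ∧ C (mul s a) := by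
        rintro a s (rfl | rfl)
        · exact ⟨Or.inl (hzero s).1, Or.inl (hzero s).2⟩
        · exact ⟨Or.inl (hpann s).1, Or.inl (hpann s).2⟩
      have hc := congr_of_ideal mul zero C (Or.inl rfl) hid
      have hne : (fun a b => a = b ∨ (C a ∧ C b)) ≠ (fun a b : S => a = b) :=
        congr_ne_eq (Or.inr ⟨Or.inr rfl, Or.inl rfl⟩) hp
      have h := hmin _ hc hne ω zero hmω
      rcases h with h | h
      · exact absurd h hω0
      · rcases h.1 with h | h
        · exact absurd h hω0
        · exact h
    -- nonzero products equal ω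
    have hprod_eq : ∀ a b, mul a b ≠ zero → mul a b = ω := by
      intro a b h
      exact (hann_unique _ h (fun s => ⟨h3nil a b s, h3nil' s a b⟩)).symm
    -- ω is an annihilator
    have hann : ∀ s, mul ω s = zero ∧ mul s ω = zero := by
      intro s
      constructor
      · by_contra h
        have hp : mul ω s = ω := hprod_eq _ _ h
        apply h
        conv_lhs => rw [← hp]
        exact h3nil ω s s
      · by_contra h
        have hp : mul s ω = ω := hprod_eq _ _ h
        apply h
        conv_lhs => rw [← hp]
        exact h3nil' s s ω
    -- ω is in the ideal generated by any nonzero element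
    have hgen : ∀ x, x ≠ zero → x = ω ∨ (∃ s, mul x s = ω) ∨ (∃ s, mul s x = ω) := by
      intro x hx
      set C : S → Prop := fun y =>
        y = zero ∨ y = x ∨ (∃ s, y = mul x s) ∨ (∃ s, y = mul s x) with hC
      have hid : ∀ a s, C a → C (mul a s) ∧ C (mul s a) := by
        rintro a s (rfl | rfl | ⟨t, rfl⟩ | ⟨t, rfl⟩)
        · exact ⟨Or.inl (hzero s).1, Or.inl (hzero s).2⟩
        · exact ⟨Or.inr (Or.inr (Or.inl ⟨s, rfl⟩)),
            Or.inr (Or.inr (Or.inr ⟨s, rfl⟩))⟩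
        · refine ⟨Or.inr (Or.inr (Or.inl ⟨mul t s, ?_⟩)), Or.inl (h3nil' s x t)⟩
          rw [hassoc]
        · refine ⟨Or.inl (h3nil t x s), Or.inr (Or.inr (Or.inr ⟨mul s t, ?_⟩))⟩
          rw [hassoc]
      have hc := congr_of_ideal mul zero C (Or.inl rfl) hid
      have hne : (fun a b => a = b ∨ (C a ∧ C b)) ≠ (fun a b : S => a = b) :=
        congr_ne_eq (Or.inr ⟨Or.inr (Or.inl rfl), Or.inl rfl⟩) hx
      have h := hmin _ hc hne ω zero hmω
      rcases h with h | h
      · exact absurd h hω0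
      · rcases h.1 with h | h | ⟨s, hs⟩ | ⟨s, hs⟩
        · exact absurd h hω0
        · exact Or.inl h.symm
        · exact Or.inr (Or.inl ⟨s, hs.symm⟩)
        · exact Or.inr (Or.inr ⟨s, hs.symm⟩)
    -- construct the graph
    refine ⟨{x : S // x ≠ zero ∧ x ≠ ω}, fun p q => mul p.1 q.1 ≠ zero, ⟨?_, ?_, ?_⟩, ?_⟩
    · -- no isolated vertices
      rintro ⟨x, hx0, hxω⟩
      rcases hgen x hx0 with h | ⟨s, hs⟩ | ⟨s, hs⟩
      · exact absurd h hxω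
      · have hs0 : s ≠ zero := by
          rintro rfl; rw [(hzero x).2] at hs; exact hω0 hs.symm
        have hsω : s ≠ ω := by
          rintro rfl; rw [(hann x).2] at hs; exact hω0 hs.symm
        exact ⟨⟨s, hs0, hsω⟩, Or.inl (by simp only [hs]; exact hω0)⟩
      · have hs0 : s ≠ zero := by
          rintro rfl; rw [(hzero x).1] at hs; exact hω0 hs.symm
        have hsω : s ≠ ω := by
          rintro rfl; rw [(hann x).1] at hs; exact hω0 hs.symm
        exact ⟨⟨s, hs0, hsω⟩, Or.inr (by simp only [hs]; exact hω0)⟩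
    · -- out-degree
      rintro ⟨v, hv⟩ ⟨a, ha⟩ ⟨b, hb⟩ h1 h2
      simp only at h1 h2
      have : mul v a = mul v b := by rw [hprod_eq _ _ h1, hprod_eq _ _ h2]
      exact Subtype.ext (hlc v a b this h1)
    · -- in-degree
      rintro ⟨v, hv⟩ ⟨a, ha⟩ ⟨b, hb⟩ h1 h2
      simp only at h1 h2
      have : mul a v = mul b v := by rw [hprod_eq _ _ h1, hprod_eq _ _ h2]
      exact Subtype.ext (hrc v a b this h1)
    · -- the isomorphism
      set φ : S → GS {x : S // x ≠ zero ∧ x ≠ ω} := fun x =>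
        if h0 : x = zero then GS.zero
        else if hw : x = ω then GS.omega
        else GS.vert ⟨x, h0, hw⟩ with hφdef
      have hφ0 : φ zero = GS.zero := by
        simp [hφdef]
      have hφω : φ ω = GS.omega := by
        simp [hφdef, hω0]
      have hφv : ∀ (x : S) (h0 : x ≠ zero) (hw : x ≠ ω),
          φ x = GS.vert ⟨x, h0, hw⟩ := by
        intro x h0 hw
        simp [hφdef, h0, hw]
      have hbij : Function.Bijective φ := by
        apply Function.bijective_iff_has_inverse.mpr
        refine ⟨fun g => match g with
          | GS.zero => zero
          | GS.omega => ω
          | GS.vert v => v.1, ?_, ?_⟩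
        · intro x
          by_cases h0 : x = zero
          · rw [h0, hφ0]
          · by_cases hw : x = ω
            · rw [hw, hφω]
            · rw [hφv x h0 hw]
        · intro g
          match g with
          | GS.zero => exact hφ0
          | GS.omega => exact hφω
          | GS.vert ⟨x, hx0, hxω⟩ => exact hφv x hx0 hxω
      refine ⟨φ, hbij, ?_, ?_⟩
      · intro a b
        by_cases hab : a = b
        · rw [hab, fAdd_self]
          simp [gsAdd]
        · rw [fAdd_ne zero hab, hφ0]
          simp only [gsAdd]
          rw [if_neg (fun h => hab (hbij.1 h))]
      · intro a b
        by_cases ha0 : a = zero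
        · rw [ha0, (hzero b).1, hφ0, gsMul_zero_left]
        · by_cases haω : a = ω
          · rw [haω, (hann b).1, hφ0, hφω, gsMul_omega_left]
          · by_cases hb0 : b = zero
            · rw [hb0, (hzero a).2, hφ0, gsMul_zero_right]
            · by_cases hbω : b = ω
              · rw [hbω, (hann a).2, hφ0, hφω, gsMul_omega_right]
              · rw [hφv a ha0 haω, hφv b hb0 hbω, gsMul_vert]
                by_cases h : mul a b = zero
                · rw [if_neg (not_not_intro h), h, hφ0]
                · rw [if_pos h, hprod_eq a b h, hφω]
  · -- graph → SI
    rintro ⟨V, E, hgraph, φ, ⟨hinj, hsurj⟩, hadd, hmul⟩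
    have hφ0 : φ zero = GS.zero := by
      obtain ⟨a, b, hab⟩ := hnontriv
      have h := hadd a b
      rw [fAdd_ne zero hab] at h
      rw [h, gsAdd, if_neg (fun he => hab (hinj he))]
    obtain ⟨w, hφw⟩ := hsurj GS.omega
    have hgsz : ∀ x : GS V, gsMul E GS.zero x = GS.zero := by
      intro x; cases x <;> rfl
    have hgsz' : ∀ x : GS V, gsMul E x GS.zero = GS.zero := by
      intro x; cases x <;> rfl
    have hgso : ∀ x : GS V, gsMul E GS.omega x = GS.zero := by
      intro x; cases x <;> rfl
    have hgso' : ∀ x : GS V, gsMul E x GS.omega = GS.zero := by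
      intro x; cases x <;> rfl
    have hw0 : w ≠ zero := by
      intro h; rw [h, hφ0] at hφw; cases hφw
    have hwann : ∀ s, mul w s = zero ∧ mul s w = zero := by
      intro s
      constructor
      · apply hinj
        rw [hmul, hφw, hφ0, hgso]
      · apply hinj
        rw [hmul, hφw, hφ0, hgso']
    set C : S → Prop := fun y => y = zero ∨ y = w with hC
    have hid : ∀ a s, C a → C (mul a s) ∧ C (mul s a) := by
      rintro a s (rfl | rfl)
      · exact ⟨Or.inl (hzero s).1, Or.inl (hzero s).2⟩
      · exact ⟨Or.inl (hwann s).1, Or.inl (hwann s).2⟩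
    refine ⟨fun a b => a = b ∨ (C a ∧ C b),
      ⟨congr_of_ideal mul zero C (Or.inl rfl) hid,
        congr_ne_eq (Or.inr ⟨Or.inr rfl, Or.inl rfl⟩) hw0⟩, ?_⟩
    intro r hr hrne a b hab
    -- get some x ≠ zero with r x zero
    obtain ⟨x, hx0, hrx⟩ : ∃ x, x ≠ zero ∧ r x zero := by
      obtain ⟨x, y, hxy, hrxy⟩ := exists_rel_ne hr.1 hrne
      by_cases hx : x = zero
      · subst hx
        exact ⟨y, fun h => hxy h.symm,
          congr_rel_zero hr (hr.1.symm hrxy) (Ne.symm hxy)⟩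
      · exact ⟨x, hx, congr_rel_zero hr hrxy hxy⟩
    -- deduce r w zero
    have hrw : r w zero := by
      cases hgx : φ x with
      | zero => exact absurd (hinj (hgx.trans hφ0.symm)) hx0
      | omega => rw [hinj (hgx.trans hφw.symm)] at hrx; exact hrx
      | vert v =>
        obtain ⟨u, hu⟩ := hgraph.1 v
        obtain ⟨y, hφy⟩ := hsurj (GS.vert u)
        rcases hu with hu | hu
        · have hxy : mul x y = w := by
            apply hinj
            rw [hmul, hgx, hφy, hφw]
            show (if E v u then GS.omega else GS.zero) = GS.omega
            rw [if_pos hu]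
          have h := hr.2.2 x zero y y hrx (hr.1.refl y)
          rw [hxy, (hzero y).1] at h
          exact h
        · have hyx : mul y x = w := by
            apply hinj
            rw [hmul, hgx, hφy, hφw]
            show (if E u v then GS.omega else GS.zero) = GS.omega
            rw [if_pos hu]
          have h := hr.2.2 y y x zero (hr.1.refl y) hrx
          rw [hyx, (hzero y).2] at h
          exact h
    rcases hab with rfl | ⟨ha, hb⟩
    · exact hr.1.refl a
    · rcases ha with rfl | rfl <;> rcases hb with rfl | rfl <;>
        first
          | exact hr.1.refl _
          | exact hrw
          | exact hr.1.symm hrw
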